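/- Let A be a dm×dn real matrix, let x ∈ ℝ^{dn} be partitioned into n blocks X_i = x_{(i-1)d+1:id} of length d, with X_1 = ⋯ = X_{n-k} = 0 and X_{n-k+1},…,X_n nonzero. Suppose that for every w ∈ ℝ^{dn} with A w = 0 and w ≠ 0, writing W_i for the i-th block of w, one has −∑_{i=n-k+1}^n (X_iᵀ W_i)/‖X_i‖₂ < ∑_{i=1}^{n-k} ‖W_i‖₂. Then x is the unique minimizer of ∑_{i=1}^n ‖W_i‖₂ over all w ∈ ℝ^{dn} satisfying A w = A x. -/

import Mathlib

open Finset

/-- Euclidean norm of a block. -/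
noncomputable def blockNorm {d : ℕ} (v : Fin d → ℝ) : ℝ := Real.sqrt (∑ j, v j ^ 2)

lemma blockNorm_eq' {d : ℕ} (v : Fin d → ℝ) :
    blockNorm v = ‖(WithLp.equiv 2 (Fin d → ℝ)).symm v‖ := by
  rw [EuclideanSpace.norm_eq, blockNorm]
  congr 1; apply Finset.sum_congr rfl; intro j _
  simp [WithLp.equiv_symm_apply, PiLp.toLp_apply, sq_abs]

lemma blockNorm_pos' {d : ℕ} {v : Fin d → ℝ} (h : v ≠ 0) : 0 < blockNorm v := by
  rw [blockNorm_eq']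
  simpa [norm_pos_iff] using fun hv => h (by ext j; exact congrFun hv j)

lemma blockNorm_sq' {d : ℕ} (v : Fin d → ℝ) : blockNorm v * blockNorm v = ∑ j, v j ^ 2 := by
  rw [blockNorm]; exact Real.mul_self_sqrt (by positivity)

lemma blockNorm_cs' {d : ℕ} (u v : Fin d → ℝ) :
    ∑ j, u j * v j ≤ blockNorm u * blockNorm v := by
  rw [blockNorm_eq', blockNorm_eq']
  have := real_inner_le_norm ((WithLp.equiv 2 (Fin d → ℝ)).symm u)
    ((WithLp.equiv 2 (Fin d → ℝ)).symm v)
  simpa [WithLp.equiv_symm_apply, PiLp.toLp_apply, PiLp.inner_apply, mul_comm] using this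

lemma blockNorm_key' {d : ℕ} (u v : Fin d → ℝ) (hu : u ≠ 0) :
    blockNorm u + (∑ j, u j * v j) / blockNorm u ≤ blockNorm (u + v) := by
  have ha : 0 < blockNorm u := blockNorm_pos' hu
  rw [← sub_nonneg]
  have h1 : ∑ j, u j * (u + v) j ≤ blockNorm u * blockNorm (u + v) := blockNorm_cs' u (u + v)
  have h2 : ∑ j, u j * (u + v) j = (∑ j, u j ^ 2) + ∑ j, u j * v j := by
    rw [← Finset.sum_add_distrib]; apply Finset.sum_congr rfl; intro j _
    simp [Pi.add_apply]; ring
  have h3 := blockNorm_sq' u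
  have : 0 ≤ blockNorm u *
      (blockNorm (u + v) - (blockNorm u + (∑ j, u j * v j) / blockNorm u)) := by
    rw [mul_sub, mul_add, mul_div_cancel₀ _ ha.ne', h3]
    linarith [h1, h2 ▸ h1]
  nlinarith [this, ha]

/-- null-space condition implies x is the unique ℓ₂/ℓ₁ minimizer. -/
theorem l2l1_unique_minimizer (d m n k : ℕ) (hk : k ≤ n)
    (A : Matrix (Fin (d * m)) (Fin n × Fin d) ℝ)
    (x : Fin n → Fin d → ℝ)
    (hzero : ∀ i : Fin n, (i : ℕ) < n - k → x i = 0)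
    (hnonzero : ∀ i : Fin n, n - k ≤ (i : ℕ) → x i ≠ 0)
    (hns : ∀ w : Fin n → Fin d → ℝ,
      A.mulVec (fun p => w p.1 p.2) = 0 → w ≠ 0 →
      -∑ i ∈ univ.filter fun i : Fin n => n - k ≤ (i : ℕ),
          (∑ j, x i j * w i j) / blockNorm (x i)
        < ∑ i ∈ univ.filter fun i : Fin n => (i : ℕ) < n - k, blockNorm (w i)) :
    ∀ w : Fin n → Fin d → ℝ,
      A.mulVec (fun p => w p.1 p.2) = A.mulVec (fun p => x p.1 p.2) → w ≠ x →
      ∑ i, blockNorm (x i) < ∑ i, blockNorm (w i) := by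
  intro w hAw hwx
  set v : Fin n → Fin d → ℝ := w - x with hv
  have hAv : A.mulVec (fun p => v p.1 p.2) = 0 := by
    have : (fun p : Fin n × Fin d => v p.1 p.2)
        = (fun p => w p.1 p.2) - (fun p => x p.1 p.2) := by
      funext p; simp [hv]
    rw [this, Matrix.mulVec_sub, hAw, sub_self]
  have hvne : v ≠ 0 := fun h => hwx (by rwa [hv, sub_eq_zero] at h)
  have hlt := hns v hAv hvne
  have hfc : (univ.filter fun i : Fin n => n - k ≤ (i : ℕ))
      = univ.filter fun i : Fin n => ¬ (i : ℕ) < n - k := by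
    apply Finset.filter_congr; intro i _; simp [not_lt]
  have hx : ∑ i, blockNorm (x i)
      = ∑ i ∈ univ.filter fun i : Fin n => ¬ (i : ℕ) < n - k, blockNorm (x i) := by
    rw [← Finset.sum_filter_add_sum_filter_not univ (fun i : Fin n => (i : ℕ) < n - k)]
    have : ∑ i ∈ univ.filter fun i : Fin n => (i : ℕ) < n - k, blockNorm (x i) = 0 := by
      apply Finset.sum_eq_zero; intro i hi
      rw [hzero i (Finset.mem_filter.mp hi).2]
      simp [blockNorm]
    rw [this, zero_add]
  have hwsum : ∑ i, blockNorm (w i)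
      = (∑ i ∈ univ.filter fun i : Fin n => (i : ℕ) < n - k, blockNorm (v i))
        + ∑ i ∈ univ.filter fun i : Fin n => ¬ (i : ℕ) < n - k, blockNorm (w i) := by
    rw [← Finset.sum_filter_add_sum_filter_not univ (fun i : Fin n => (i : ℕ) < n - k)]
    congr 1
    apply Finset.sum_congr rfl; intro i hi
    have hx0 := hzero i (Finset.mem_filter.mp hi).2
    congr 1; rw [hv]; funext j; simp [hx0]
  have hge : ∀ i ∈ univ.filter fun i : Fin n => ¬ (i : ℕ) < n - k,
      blockNorm (x i) + (∑ j, x i j * v i j) / blockNorm (x i) ≤ blockNorm (w i) := by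
    intro i hi
    have hne := hnonzero i (not_lt.mp (Finset.mem_filter.mp hi).2)
    have : w i = x i + v i := by rw [hv]; funext j; simp
    rw [this]
    exact blockNorm_key' (x i) (v i) hne
  have hsum := Finset.sum_le_sum hge
  rw [Finset.sum_add_distrib] at hsum
  rw [hfc] at hlt
  rw [hx, hwsum]
  linarith
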